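/- For every n ≥ 2, the number of independent sets S of the para-chain square cactus Q_n whose set of vertices not dominated by S is exactly {x_n} equals the number of independent dominating sets of Q_{n-1} that contain the end cut vertex x_{n-1}. (Equivalently, any such set S must contain x_{n-1}.) -/

import Mathlib

/-- `S` is an independent dominating set of `G`: pairwise non-adjacent, and every
vertex outside `S` has a neighbour in `S`. -/
def IsIndepDomSet {V : Type*} (G : SimpleGraph V) (S : Finset V) : Prop :=
  (∀ v ∈ S, ∀ w ∈ S, ¬ G.Adj v w) ∧ ∀ v, v ∉ S → ∃ w ∈ S, G.Adj v w

/-- The para-chain square cactus `Q n`: `Sum.inl i` is the cut vertex `x i`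
(`0 ≤ i ≤ n`), `Sum.inr (Sum.inl k)` is `u (k+1)` and `Sum.inr (Sum.inr k)` is
`w (k+1)` (`0 ≤ k ≤ n-1`); the `i`-th square (`1 ≤ i ≤ n`) is the four-cycle
`x (i-1) – u i – x i – w i – x (i-1)`. -/
def paraSq (n : ℕ) : SimpleGraph (Fin (n + 1) ⊕ (Fin n ⊕ Fin n)) :=
  SimpleGraph.fromRel fun p q =>
    match p, q with
    | Sum.inl i, Sum.inr (Sum.inl k) => (i : ℕ) = (k : ℕ) ∨ (i : ℕ) = (k : ℕ) + 1
    | Sum.inl i, Sum.inr (Sum.inr k) => (i : ℕ) = (k : ℕ) ∨ (i : ℕ) = (k : ℕ) + 1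
    | _, _ => False

/-- The number of independent dominating sets of the para-chain square cactus `Q n`. -/
noncomputable def numIDSParaSq (n : ℕ) : ℕ :=
  Nat.card {S : Finset (Fin (n + 1) ⊕ (Fin n ⊕ Fin n)) // IsIndepDomSet (paraSq n) S}

lemma adj_ll {n : ℕ} (i j : Fin (n+1)) : ¬ (paraSq n).Adj (.inl i) (.inl j) := by
  simp [paraSq, SimpleGraph.fromRel_adj]

lemma adj_rr {n : ℕ} (a b : Fin n ⊕ Fin n) : ¬ (paraSq n).Adj (.inr a) (.inr b) := by
  simp [paraSq, SimpleGraph.fromRel_adj]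

lemma adj_lrl {n : ℕ} (i : Fin (n+1)) (k : Fin n) :
    (paraSq n).Adj (.inl i) (.inr (.inl k)) ↔ (i : ℕ) = k ∨ (i : ℕ) = k + 1 := by
  simp [paraSq, SimpleGraph.fromRel_adj]

lemma adj_lrr {n : ℕ} (i : Fin (n+1)) (k : Fin n) :
    (paraSq n).Adj (.inl i) (.inr (.inr k)) ↔ (i : ℕ) = k ∨ (i : ℕ) = k + 1 := by
  simp [paraSq, SimpleGraph.fromRel_adj]

lemma adj_rll {n : ℕ} (i : Fin (n+1)) (k : Fin n) :
    (paraSq n).Adj (.inr (.inl k)) (.inl i) ↔ (i : ℕ) = k ∨ (i : ℕ) = k + 1 := by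
  rw [SimpleGraph.adj_comm]; exact adj_lrl i k

lemma adj_rrl {n : ℕ} (i : Fin (n+1)) (k : Fin n) :
    (paraSq n).Adj (.inr (.inr k)) (.inl i) ↔ (i : ℕ) = k ∨ (i : ℕ) = k + 1 := by
  rw [SimpleGraph.adj_comm]; exact adj_lrr i k

def emb (n : ℕ) : (Fin (n+1) ⊕ (Fin n ⊕ Fin n)) ↪ (Fin (n+2) ⊕ (Fin (n+1) ⊕ Fin (n+1))) :=
  Function.Embedding.sumMap Fin.castSuccEmb
    (Function.Embedding.sumMap Fin.castSuccEmb Fin.castSuccEmb)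

lemma emb_inl {n : ℕ} (i : Fin (n+1)) : emb n (.inl i) = .inl i.castSucc := rfl
lemma emb_inrl {n : ℕ} (k : Fin n) : emb n (.inr (.inl k)) = .inr (.inl k.castSucc) := rfl
lemma emb_inrr {n : ℕ} (k : Fin n) : emb n (.inr (.inr k)) = .inr (.inr k.castSucc) := rfl

lemma adj_emb {n : ℕ} (p q : Fin (n+1) ⊕ (Fin n ⊕ Fin n)) :
    (paraSq (n+1)).Adj (emb n p) (emb n q) ↔ (paraSq n).Adj p q := by
  rcases p with i | k | k <;> rcases q with j | l | l <;>
    simp [emb_inl, emb_inrl, emb_inrr, adj_ll, adj_rr, adj_lrl, adj_lrr, adj_rll, adj_rrl]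

def Cond2 (n : ℕ) (S : Finset (Fin (n + 2) ⊕ (Fin (n + 1) ⊕ Fin (n + 1)))) : Prop :=
  (∀ v ∈ S, ∀ w ∈ S, ¬ (paraSq (n + 1)).Adj v w) ∧
    ∀ v, (v ∉ S ∧ ∀ w ∈ S, ¬ (paraSq (n + 1)).Adj v w) ↔ v = Sum.inl (Fin.last (n + 1))

def Cond1 (n : ℕ) (T : Finset (Fin (n + 1) ⊕ (Fin n ⊕ Fin n))) : Prop :=
  IsIndepDomSet (paraSq n) T ∧ Sum.inl (Fin.last n) ∈ T

lemma fwd {n : ℕ} (T : Finset (Fin (n + 1) ⊕ (Fin n ⊕ Fin n))) (hT : Cond1 n T) :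
    Cond2 n (T.map (emb n)) := by
  obtain ⟨⟨hind, hdom⟩, hx⟩ := hT
  constructor
  · intro v hv w hw
    rw [Finset.mem_map] at hv hw
    obtain ⟨p, hp, rfl⟩ := hv
    obtain ⟨q, hq, rfl⟩ := hw
    rw [adj_emb]
    exact hind p hp q hq
  · -- helper: every vertex in the range of emb is dominated or in S
    have key : ∀ p, ¬ ((emb n p ∉ T.map (emb n)) ∧
        ∀ w ∈ T.map (emb n), ¬ (paraSq (n+1)).Adj (emb n p) w) := by
      rintro p ⟨hnot, hadj⟩
      have hpT : p ∉ T := fun h => hnot (Finset.mem_map_of_mem _ h)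
      obtain ⟨q, hq, hqa⟩ := hdom p hpT
      exact hadj (emb n q) (Finset.mem_map_of_mem _ hq) ((adj_emb p q).mpr hqa)
    intro v
    constructor
    · -- hard direction: contrapositive
      intro ⟨hv, hadj⟩
      by_contra hne
      rcases v with i | k | k
      · -- i ≠ last (n+1)
        have hi : (i : ℕ) < n + 1 := by
          by_contra h
          exact hne (congrArg Sum.inl (Fin.ext (by simp [Fin.val_last]; omega)))
        have : i = Fin.castSucc ⟨(i : ℕ), hi⟩ := Fin.ext rfl
        rw [this] at hv hadj
        exact key (.inl ⟨(i : ℕ), hi⟩) ⟨hv, hadj⟩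
      · rcases Nat.lt_or_ge (k : ℕ) n with hk | hk
        · have : k = Fin.castSucc ⟨(k : ℕ), hk⟩ := Fin.ext rfl
          rw [this] at hv hadj
          exact key (.inr (.inl ⟨(k : ℕ), hk⟩)) ⟨hv, hadj⟩
        · -- k = n : v = u_{n+1}, adjacent to x_n ∈ S
          have hkn : (k : ℕ) = n := by omega
          refine hadj (emb n (.inl (Fin.last n))) (Finset.mem_map_of_mem _ hx) ?_
          rw [emb_inl, adj_rll]
          left; simp [hkn]
      · rcases Nat.lt_or_ge (k : ℕ) n with hk | hk
        · have : k = Fin.castSucc ⟨(k : ℕ), hk⟩ := Fin.ext rfl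
          rw [this] at hv hadj
          exact key (.inr (.inr ⟨(k : ℕ), hk⟩)) ⟨hv, hadj⟩
        · have hkn : (k : ℕ) = n := by omega
          refine hadj (emb n (.inl (Fin.last n))) (Finset.mem_map_of_mem _ hx) ?_
          rw [emb_inl, adj_rrl]
          left; simp [hkn]
    · rintro rfl
      constructor
      · intro h
        rw [Finset.mem_map] at h
        obtain ⟨p, _, hp⟩ := h
        rcases p with i | k | k <;> simp [emb_inl, emb_inrl, emb_inrr] at hp
      · intro w hw
        rw [Finset.mem_map] at hw
        obtain ⟨p, _, rfl⟩ := hw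
        rcases p with i | k | k
        · exact adj_ll _ _
        · rw [emb_inrl, adj_lrl]
          simp only [Fin.val_last, Fin.coe_castSucc]
          omega
        · rw [emb_inrr, adj_lrr]
          simp only [Fin.val_last, Fin.coe_castSucc]
          omega

lemma top_facts {n : ℕ} (S : Finset (Fin (n + 2) ⊕ (Fin (n + 1) ⊕ Fin (n + 1))))
    (hS : Cond2 n S) :
    Sum.inl (Fin.last (n+1)) ∉ S ∧ Sum.inr (Sum.inl (Fin.last n)) ∉ S ∧
      Sum.inr (Sum.inr (Fin.last n)) ∉ S := by
  obtain ⟨hA, hB⟩ := (hS.2 (Sum.inl (Fin.last (n+1)))).mpr rfl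
  refine ⟨hA, fun h => ?_, fun h => ?_⟩
  · exact hB _ h (by rw [adj_lrl]; right; simp [Fin.val_last])
  · exact hB _ h (by rw [adj_lrr]; right; simp [Fin.val_last])

lemma range_lemma {n : ℕ} (S : Finset (Fin (n + 2) ⊕ (Fin (n + 1) ⊕ Fin (n + 1))))
    (hS : Cond2 n S) : ∀ v ∈ S, ∃ p, emb n p = v := by
  obtain ⟨hA, hC, hD⟩ := top_facts S hS
  intro v hv
  rcases v with i | k | k
  · have hi : (i : ℕ) < n + 1 := by
      by_contra h
      exact hA (by
        have : i = Fin.last (n+1) := Fin.ext (by simp [Fin.val_last]; omega)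
        rwa [this] at hv)
    exact ⟨.inl ⟨(i : ℕ), hi⟩, by rw [emb_inl]; exact congrArg Sum.inl (Fin.ext rfl)⟩
  · have hk : (k : ℕ) < n := by
      by_contra h
      exact hC (by
        have : k = Fin.last n := Fin.ext (by simp [Fin.val_last]; omega)
        rwa [this] at hv)
    exact ⟨.inr (.inl ⟨(k : ℕ), hk⟩), by
      rw [emb_inrl]; exact congrArg (fun x => Sum.inr (Sum.inl x)) (Fin.ext rfl)⟩
  · have hk : (k : ℕ) < n := by
      by_contra h
      exact hD (by
        have : k = Fin.last n := Fin.ext (by simp [Fin.val_last]; omega)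
        rwa [this] at hv)
    exact ⟨.inr (.inr ⟨(k : ℕ), hk⟩), by
      rw [emb_inrr]; exact congrArg (fun x => Sum.inr (Sum.inr x)) (Fin.ext rfl)⟩

lemma emb_ne_last {n : ℕ} (p : Fin (n+1) ⊕ (Fin n ⊕ Fin n)) :
    emb n p ≠ Sum.inl (Fin.last (n+1)) := by
  rcases p with i | k | k
  · rw [emb_inl]
    intro h
    have := congrArg Fin.val (Sum.inl.inj h)
    simp [Fin.val_last] at this
    omega
  · rw [emb_inrl]; exact fun h => by simp at h
  · rw [emb_inrr]; exact fun h => by simp at h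

lemma bwd {n : ℕ} (S : Finset (Fin (n + 2) ⊕ (Fin (n + 1) ⊕ Fin (n + 1))))
    (hS : Cond2 n S) : Cond1 n (S.preimage (emb n) (emb n).injective.injOn) := by
  obtain ⟨hA, hC, hD⟩ := top_facts S hS
  refine ⟨⟨?_, ?_⟩, ?_⟩
  · intro p hp q hq
    rw [Finset.mem_preimage] at hp hq
    rw [← adj_emb]
    exact hS.1 _ hp _ hq
  · intro p hp
    rw [Finset.mem_preimage] at hp
    have h1 : ¬ ((emb n p ∉ S) ∧ ∀ w ∈ S, ¬ (paraSq (n+1)).Adj (emb n p) w) := by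
      rw [hS.2 (emb n p)]
      exact emb_ne_last p
    push_neg at h1
    obtain ⟨w, hw, hadj⟩ := h1 hp
    obtain ⟨q, rfl⟩ := range_lemma S hS w hw
    exact ⟨q, Finset.mem_preimage.mpr hw, (adj_emb p q).mp hadj⟩
  · -- x_n ∈ T
    rw [Finset.mem_preimage]
    have h1 : ¬ ((Sum.inr (Sum.inl (Fin.last n)) ∉ S) ∧
        ∀ w ∈ S, ¬ (paraSq (n+1)).Adj (Sum.inr (Sum.inl (Fin.last n))) w) := by
      rw [hS.2]
      simp
    push_neg at h1
    obtain ⟨w, hw, hadj⟩ := h1 hC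
    rcases w with i | a
    · rw [adj_rll] at hadj
      have hi : (i : ℕ) = n := by
        rcases hadj with h | h
        · simpa [Fin.val_last] using h
        · exfalso
          apply hA
          have : i = Fin.last (n+1) := Fin.ext (by
            simp only [Fin.val_last] at h ⊢; omega)
          rwa [this] at hw
      have : emb n (Sum.inl (Fin.last n)) = Sum.inl i := by
        rw [emb_inl]
        exact congrArg Sum.inl (Fin.ext (by simp [Fin.val_last, hi]))
      rwa [this]
    · exact absurd hadj (adj_rr _ _)

/-- For every `n ≥ 2` (here written with `n + 1`, `n ≥ 1`): the number of
independent sets `S` of `Q (n+1)` whose set of non-dominated vertices is exactly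
`{x (n+1)}` equals the number of independent dominating sets of `Q n` containing
the end cut vertex `x n`. -/
theorem numAlmostIDSParaSq (n : ℕ) (hn : 1 ≤ n) :
    Nat.card {S : Finset (Fin (n + 2) ⊕ (Fin (n + 1) ⊕ Fin (n + 1))) //
        (∀ v ∈ S, ∀ w ∈ S, ¬ (paraSq (n + 1)).Adj v w) ∧
        ∀ v, (v ∉ S ∧ ∀ w ∈ S, ¬ (paraSq (n + 1)).Adj v w) ↔
          v = Sum.inl (Fin.last (n + 1))} =
      Nat.card {S : Finset (Fin (n + 1) ⊕ (Fin n ⊕ Fin n)) //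
        IsIndepDomSet (paraSq n) S ∧ Sum.inl (Fin.last n) ∈ S} := by
  show Nat.card {S // Cond2 n S} = Nat.card {T // Cond1 n T}
  refine Nat.card_congr ⟨fun S => ⟨S.1.preimage (emb n) (emb n).injective.injOn, bwd S.1 S.2⟩,
    fun T => ⟨T.1.map (emb n), fwd T.1 T.2⟩, ?_, ?_⟩
  · rintro ⟨S, hS⟩
    apply Subtype.ext
    dsimp only
    ext v
    simp only [Finset.mem_map, Finset.mem_preimage]
    constructor
    · rintro ⟨p, hp, rfl⟩; exact hp
    · intro hv
      obtain ⟨p, rfl⟩ := range_lemma S hS v hv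
      exact ⟨p, hv, rfl⟩
  · rintro ⟨T, hT⟩
    apply Subtype.ext
    exact Finset.preimage_map (emb n) T
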